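/- arXiv:2104.13967 — 2 statements merged into one kernel-verified Lean document; each statement's English description precedes it below -/
import Mathlib

section
/- For any w ∈ W^{1,p}(0,T;X) ∩ W^{2,1}(0,T;X) with X a Banach space and 1 ≤ p < ∞, the Caputo derivative D_t^α w converges to w_t in L^p(0,T;X) as α → 1⁻. -/
open MeasureTheory Set Filter
open Topology

/-- Caputo fractional derivative of order `α ∈ (0,1)` of an `X`-valued function,
expressed through its derivative `w'`. -/
noncomputable def caputoDeriv {X : Type*} [NormedAddCommGroup X] [NormedSpace ℝ X]
    (α : ℝ) (w' : ℝ → X) (t : ℝ) : X :=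
  (Real.Gamma (1 - α))⁻¹ • ∫ s in (0:ℝ)..t, ((t - s) ^ (-α) : ℝ) • w' s

section CaputoAux

open intervalIntegral

lemma rpow_le_one_max {x c M : ℝ} (hx : 0 ≤ x) (hxM : x ≤ M) (hc0 : 0 ≤ c) (hc1 : c ≤ 1) :
    x ^ c ≤ max 1 M := by
  rcases le_or_gt x 1 with h | h
  · exact le_max_of_le_left (Real.rpow_le_one hx h hc0)
  · calc x ^ c ≤ x ^ (1:ℝ) := Real.rpow_le_rpow_of_exponent_le h.le hc1
    _ = x := Real.rpow_one x
    _ ≤ max 1 M := le_max_of_le_right hxM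

lemma integral_kern {α : ℝ} (hα : α < 1) {r t : ℝ} :
    ∫ s in r..t, ((t - s) ^ (-α) : ℝ) = (t - r) ^ (1 - α) / (1 - α) := by
  rw [show (fun s => ((t - s) ^ (-α) : ℝ)) = fun s => (fun u => (u ^ (-α) : ℝ)) (t - s) from rfl,
    intervalIntegral.integral_comp_sub_left (fun u => (u ^ (-α) : ℝ)) t]
  rw [sub_self, integral_rpow (Or.inl (by linarith))]
  rw [Real.zero_rpow (by intro h; linarith [h])]
  rw [show -α + 1 = 1 - α by ring]
  ring

lemma kern_intable {α t : ℝ} (hα : α < 1) (ht : 0 ≤ t) :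
    IntegrableOn (fun s => ((t - s) ^ (-α) : ℝ)) (Ioc 0 t) := by
  have h : IntervalIntegrable (fun u => (u ^ (-α) : ℝ)) volume 0 t :=
    intervalIntegral.intervalIntegrable_rpow' (by linarith)
  have h2 := h.comp_sub_left t
  rw [sub_self, sub_zero] at h2
  exact (intervalIntegrable_iff_integrableOn_Ioc_of_le ht).mp h2.symm

lemma fubini_caputo {X : Type*} [NormedAddCommGroup X] [NormedSpace ℝ X] [CompleteSpace X]
    {α t : ℝ} (hα : α < 1) (ht : 0 < t) {f : ℝ → X} (hf : IntegrableOn f (Ioc 0 t)) :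
    ∫ s in Ioc 0 t, ((t - s) ^ (-α) : ℝ) • (∫ r in Ioc 0 s, f r) =
      ∫ r in Ioc 0 t, (((t - r) ^ (1 - α) / (1 - α)) : ℝ) • f r := by
  set μ := volume.restrict (Ioc (0:ℝ) t) with hμ
  set S : Set (ℝ × ℝ) := {q : ℝ × ℝ | q.2 ≤ q.1} with hSdef
  have hS : MeasurableSet S := measurableSet_le measurable_snd measurable_fst
  set F : ℝ × ℝ → X := S.indicator (fun q => ((t - q.1) ^ (-α) : ℝ) • f q.2) with hFdef
  have hK : Integrable (fun s => ((t - s) ^ (-α) : ℝ)) μ := kern_intable hα ht.le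
  have hFi : Integrable F (μ.prod μ) := ((hK.smul_prod hf).indicator hS)
  have swap := MeasureTheory.integral_integral_swap (f := fun s r => F (s, r))
    (μ := μ) (ν := μ) hFi
  have hleft : (∫ s, ∫ r, F (s, r) ∂μ ∂μ)
      = ∫ s in Ioc 0 t, ((t - s) ^ (-α) : ℝ) • (∫ r in Ioc 0 s, f r) := by
    apply setIntegral_congr_fun measurableSet_Ioc
    intro s hs
    have h1 : (fun r => F (s, r)) = (Iic s).indicator (fun r => ((t - s) ^ (-α) : ℝ) • f r) := by
      ext r
      by_cases h : r ≤ s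
      · simp [hFdef, hSdef, Set.indicator_of_mem, h]
      · simp [hFdef, hSdef, Set.indicator_of_notMem, h]
    show ∫ r, F (s, r) ∂μ = ((t - s) ^ (-α) : ℝ) • ∫ r in Ioc 0 s, f r
    rw [h1, MeasureTheory.integral_indicator measurableSet_Iic, hμ,
      Measure.restrict_restrict measurableSet_Iic,
      show Iic s ∩ Ioc 0 t = Ioc 0 s by
        ext x; simp only [mem_inter_iff, mem_Iic, mem_Ioc]
        exact ⟨fun ⟨h1, h2, h3⟩ => ⟨h2, h1⟩, fun ⟨h1, h2⟩ => ⟨h2, h1, h2.trans hs.2⟩⟩,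
      MeasureTheory.integral_smul]
  have hright : (∫ r, ∫ s, F (s, r) ∂μ ∂μ)
      = ∫ r in Ioc 0 t, (((t - r) ^ (1 - α) / (1 - α)) : ℝ) • f r := by
    apply setIntegral_congr_fun measurableSet_Ioc
    intro r hr
    have h1 : (fun s => F (s, r)) = (Ici r).indicator (fun s => ((t - s) ^ (-α) : ℝ) • f r) := by
      ext s
      by_cases h : r ≤ s
      · simp [hFdef, hSdef, Set.indicator_of_mem, h]
      · simp [hFdef, hSdef, Set.indicator_of_notMem, h]
    show ∫ s, F (s, r) ∂μ = (((t - r) ^ (1 - α) / (1 - α)) : ℝ) • f r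
    rw [h1, MeasureTheory.integral_indicator measurableSet_Ici, hμ,
      Measure.restrict_restrict measurableSet_Ici,
      show Ici r ∩ Ioc 0 t = Icc r t by
        ext x; simp only [mem_inter_iff, mem_Ici, mem_Ioc, mem_Icc]
        exact ⟨fun ⟨h1, _, h3⟩ => ⟨h1, h3⟩, fun ⟨h1, h2⟩ => ⟨h1, hr.1.trans_le h1, h2⟩⟩,
      _root_.integral_smul_const, integral_Icc_eq_integral_Ioc,
      ← intervalIntegral.integral_of_le hr.2, integral_kern hα]
  rw [← hleft, ← hright, hμ]
  exact swap

lemma maxker_cont {α t : ℝ} (hα : α < 1) :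
    Continuous (fun r => ((max (t - r) 0) ^ (1 - α) : ℝ)) :=
  (Real.continuous_rpow_const (by linarith)).comp
    ((continuous_const.sub continuous_id).max continuous_const)

lemma maxker_intable {X : Type*} [NormedAddCommGroup X] [NormedSpace ℝ X]
    {α t T : ℝ} (hα0 : 0 < α) (hα : α < 1) (ht0 : 0 ≤ t) (htT : t ≤ T)
    {w'' : ℝ → X} (hw''i : IntegrableOn w'' (Ioc 0 T)) :
    IntegrableOn (fun r => ((max (t - r) 0) ^ (1 - α) : ℝ) • w'' r) (Ioc 0 T) := by
  apply Integrable.mono' (hw''i.norm.const_mul (max 1 T))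
  · exact ((maxker_cont hα).aestronglyMeasurable).smul hw''i.aestronglyMeasurable
  · filter_upwards [ae_restrict_mem measurableSet_Ioc] with r hr
    rw [norm_smul, Real.norm_eq_abs, abs_of_nonneg (Real.rpow_nonneg (le_max_right _ _) _)]
    apply mul_le_mul_of_nonneg_right _ (norm_nonneg _)
    exact rpow_le_one_max (le_max_right _ _)
      (max_le (by linarith [hr.1]) (le_trans ht0 htT))
      (by linarith) (by linarith)

lemma maxker_integral_reduce {X : Type*} [NormedAddCommGroup X] [NormedSpace ℝ X]
    [CompleteSpace X] {α t T : ℝ} (hα0 : 0 < α) (hα : α < 1) (ht : 0 ≤ t) (htT : t ≤ T)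
    {w'' : ℝ → X} (hw''i : IntegrableOn w'' (Ioc 0 T)) :
    ∫ r in Ioc 0 T, ((max (t - r) 0) ^ (1 - α) : ℝ) • w'' r
      = ∫ r in Ioc 0 t, (((t - r) ^ (1 - α) : ℝ)) • w'' r := by
  have hsplit : Ioc (0:ℝ) t ∪ Ioc t T = Ioc 0 T := Ioc_union_Ioc_eq_Ioc ht htT
  have hint := maxker_intable (X := X) hα0 hα ht htT hw''i
  rw [← hsplit, setIntegral_union (Ioc_disjoint_Ioc_of_le le_rfl) measurableSet_Ioc
      (hint.mono_set (by rw [← hsplit]; exact subset_union_left))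
      (hint.mono_set (by rw [← hsplit]; exact subset_union_right))]
  have h2 : ∫ r in Ioc t T, ((max (t - r) 0) ^ (1 - α) : ℝ) • w'' r = 0 := by
    rw [setIntegral_congr_fun measurableSet_Ioc (g := fun _ => (0:X))
        (fun r hr => by
          rw [max_eq_right (by linarith [hr.1]), Real.zero_rpow (by linarith), zero_smul]),
      integral_zero]
  rw [h2, add_zero]
  exact setIntegral_congr_fun measurableSet_Ioc
    (fun r hr => by rw [max_eq_left (by linarith [hr.2])])

lemma caputo_eq {X : Type*} [NormedAddCommGroup X] [NormedSpace ℝ X] [CompleteSpace X]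
    {T α : ℝ} (hα0 : 0 < α) (hα : α < 1)
    {w' w'' : ℝ → X}
    (hw' : ∀ t ∈ Set.Icc (0:ℝ) T, w' t = w' 0 + ∫ s in (0:ℝ)..t, w'' s)
    (hw''i : IntegrableOn w'' (Ioc 0 T))
    {t : ℝ} (htm : t ∈ Set.Icc (0:ℝ) T) :
    caputoDeriv α w' t = (Real.Gamma (2 - α))⁻¹ •
      ((t ^ (1 - α) : ℝ) • w' 0
        + ∫ r in Ioc 0 T, ((max (t - r) 0) ^ (1 - α) : ℝ) • w'' r) := by
  have h1α : (1:ℝ) - α ≠ 0 := by intro h; linarith [h]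
  rcases eq_or_lt_of_le htm.1 with rfl | ht
  · rw [caputoDeriv, intervalIntegral.integral_same, smul_zero]
    rw [Real.zero_rpow h1α, zero_smul,
      setIntegral_congr_fun measurableSet_Ioc (g := fun _ => (0:X))
        (fun r hr => by
          rw [max_eq_right (by linarith [hr.1]), Real.zero_rpow h1α, zero_smul]),
      integral_zero, add_zero, smul_zero]
  · rw [maxker_integral_reduce hα0 hα ht.le htm.2 hw''i]
    rw [caputoDeriv, intervalIntegral.integral_of_le ht.le]
    have hw''t : IntegrableOn w'' (Ioc 0 t) :=
      hw''i.mono_set (Ioc_subset_Ioc le_rfl htm.2)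
    have hcongr : ∀ s ∈ Ioc (0:ℝ) t,
        ((t - s) ^ (-α) : ℝ) • w' s
          = ((t - s) ^ (-α) : ℝ) • w' 0 + ((t - s) ^ (-α) : ℝ) • (∫ r in Ioc 0 s, w'' r) := by
      intro s hs
      rw [hw' s ⟨hs.1.le, hs.2.trans htm.2⟩, smul_add,
        intervalIntegral.integral_of_le hs.1.le]
    rw [setIntegral_congr_fun measurableSet_Ioc hcongr]
    have hK := kern_intable (t := t) hα ht.le
    have i1 : IntegrableOn (fun s => ((t - s) ^ (-α) : ℝ) • w' 0) (Ioc 0 t) :=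
      hK.smul_const (w' 0)
    have hC : IntegrableOn (fun r => ‖w'' r‖) (Ioc 0 t) := hw''t.norm
    have i2 : IntegrableOn
        (fun s => ((t - s) ^ (-α) : ℝ) • (∫ r in Ioc 0 s, w'' r)) (Ioc 0 t) := by
      apply Integrable.mono' (hK.mul_const (∫ r in Ioc 0 t, ‖w'' r‖))
      · apply hK.aestronglyMeasurable.smul
        have hcont : ContinuousOn (fun s => ∫ r in Ioc 0 s, w'' r) (Icc 0 t) :=
          intervalIntegral.continuousOn_primitive
            ((integrableOn_Icc_iff_integrableOn_Ioc).mpr hw''t)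
        exact (hcont.aestronglyMeasurable measurableSet_Icc).mono_measure
          (Measure.restrict_mono Ioc_subset_Icc_self le_rfl)
      · filter_upwards [ae_restrict_mem measurableSet_Ioc] with s hs
        rw [norm_smul, Real.norm_eq_abs,
          abs_of_nonneg (Real.rpow_nonneg (by linarith [hs.2]) _)]
        apply mul_le_mul_of_nonneg_left _ (Real.rpow_nonneg (by linarith [hs.2]) _)
        calc ‖∫ r in Ioc 0 s, w'' r‖ ≤ ∫ r in Ioc 0 s, ‖w'' r‖ := norm_integral_le_integral_norm _
          _ ≤ ∫ r in Ioc 0 t, ‖w'' r‖ :=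
            setIntegral_mono_set hC
              (Eventually.of_forall (fun r => norm_nonneg _))
              (HasSubset.Subset.eventuallyLE (Ioc_subset_Ioc le_rfl hs.2))
    rw [integral_add i1 i2, fubini_caputo hα ht hw''t, _root_.integral_smul_const]
    rw [← intervalIntegral.integral_of_le ht.le, integral_kern hα, sub_zero]
    have hgamma : Real.Gamma (2 - α) = (1 - α) * Real.Gamma (1 - α) := by
      rw [show (2:ℝ) - α = (1 - α) + 1 by ring, Real.Gamma_add_one h1α]
    simp_rw [div_eq_inv_mul, mul_smul, MeasureTheory.integral_smul]
    rw [← smul_add, smul_smul, hgamma, mul_inv, mul_comm]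

lemma tendsto_const_rpow_one_sub {b : ℝ} (hb : 0 < b) :
    Tendsto (fun α : ℝ => (b ^ (1 - α) : ℝ)) (nhdsWithin 1 (Iio 1)) (𝓝 1) := by
  have h0 : Tendsto (fun α : ℝ => 1 - α) (nhdsWithin 1 (Iio 1)) (𝓝 0) := by
    have h : Continuous (fun α : ℝ => 1 - α) := continuous_const.sub continuous_id
    have := (h.tendsto (1:ℝ)).mono_left (nhdsWithin_le_nhds (s := Iio (1:ℝ)))
    simpa using this
  have := (Real.continuousAt_const_rpow (a := b) hb.ne').tendsto.comp h0
  simpa [Function.comp_def, Real.rpow_zero] using this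

lemma mem_Ioo_eventually : ∀ᶠ α : ℝ in nhdsWithin 1 (Iio 1), α ∈ Ioo (0:ℝ) 1 := by
  filter_upwards [eventually_mem_nhdsWithin,
    eventually_nhdsWithin_of_eventually_nhds
      (eventually_gt_nhds (by norm_num : (0:ℝ) < 1))] with α h1 h2
  exact ⟨h2, h1⟩

lemma inner_tendsto {X : Type*} [NormedAddCommGroup X] [NormedSpace ℝ X] [CompleteSpace X]
    {t T : ℝ} (ht : 0 < t) (htT : t ≤ T) {w'' : ℝ → X} (hw''i : IntegrableOn w'' (Ioc 0 T)) :
    Tendsto (fun α : ℝ => ∫ r in Ioc 0 T, ((max (t - r) 0) ^ (1 - α) : ℝ) • w'' r)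
      (nhdsWithin 1 (Iio 1)) (𝓝 (∫ r in Ioc 0 t, w'' r)) := by
  have hlim_eq : ∫ r in Ioc 0 t, w'' r = ∫ r in Ioc 0 T, (Iic t).indicator w'' r := by
    rw [MeasureTheory.integral_indicator measurableSet_Iic,
      Measure.restrict_restrict measurableSet_Iic,
      show Iic t ∩ Ioc 0 T = Ioc 0 t by
        ext x; simp only [mem_inter_iff, mem_Iic, mem_Ioc]
        exact ⟨fun ⟨h1, h2, h3⟩ => ⟨h2, h1⟩, fun ⟨h1, h2⟩ => ⟨h2, h1, h2.trans htT⟩⟩]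
  rw [hlim_eq]
  apply MeasureTheory.tendsto_integral_filter_of_dominated_convergence
    (bound := fun r => (max 1 T) * ‖w'' r‖)
  · filter_upwards [mem_Ioo_eventually] with α hα
    exact ((maxker_cont hα.2).aestronglyMeasurable).smul hw''i.aestronglyMeasurable
  · filter_upwards [mem_Ioo_eventually] with α hα
    filter_upwards [ae_restrict_mem measurableSet_Ioc] with r hr
    rw [norm_smul, Real.norm_eq_abs, abs_of_nonneg (Real.rpow_nonneg (le_max_right _ _) _)]
    apply mul_le_mul_of_nonneg_right _ (norm_nonneg _)
    exact rpow_le_one_max (le_max_right _ _)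
      (max_le (by linarith [hr.1]) (by linarith [ht.trans_le htT]))
      (by linarith [hα.2]) (by linarith [hα.1])
  · exact hw''i.norm.const_mul _
  · have hne : ∀ᵐ r ∂(volume.restrict (Ioc (0:ℝ) T)), r ≠ t := by
      apply ae_restrict_of_ae
      rw [ae_iff]
      simpa using Real.volume_singleton (a := t)
    filter_upwards [hne] with r hrne
    rcases lt_or_gt_of_ne hrne with hlt | hgt
    · rw [Set.indicator_of_mem (mem_Iic.mpr hlt.le)]
      have hbase : max (t - r) 0 = t - r := max_eq_left (by linarith)
      rw [show (fun α : ℝ => ((max (t - r) 0) ^ (1 - α) : ℝ) • w'' r)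
          = fun α : ℝ => ((t - r) ^ (1 - α) : ℝ) • w'' r by simp [hbase]]
      have := (tendsto_const_rpow_one_sub (b := t - r) (by linarith)).smul_const (w'' r)
      simpa using this
    · rw [Set.indicator_of_notMem (by simp only [mem_Iic]; push_neg; linarith)]
      apply Tendsto.congr' _ tendsto_const_nhds
      filter_upwards [mem_Ioo_eventually] with α hα
      rw [max_eq_right (by linarith), Real.zero_rpow (by linarith [hα.2]), zero_smul]

end CaputoAux

/-- For `w ∈ W^{1,p}(0,T;X) ∩ W^{2,1}(0,T;X)` (encoded: `w` is the integral of `w'`,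
`w'` the integral of `w''`, with `w' ∈ L^p` and `w'' ∈ L^1`), the Caputo derivative
`D_t^α w` converges to `w_t` in `L^p(0,T;X)` as `α → 1⁻`. -/
theorem caputo_tendsto_deriv_Lp {X : Type*} [NormedAddCommGroup X] [NormedSpace ℝ X]
    [CompleteSpace X] (T p : ℝ) (hT : 0 < T) (hp : 1 ≤ p)
    (w w' w'' : ℝ → X)
    (hw : ∀ t ∈ Set.Icc (0:ℝ) T, w t = w 0 + ∫ s in (0:ℝ)..t, w' s)
    (hw' : ∀ t ∈ Set.Icc (0:ℝ) T, w' t = w' 0 + ∫ s in (0:ℝ)..t, w'' s)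
    (hw'i : IntervalIntegrable w' volume 0 T)
    (hw'p : IntervalIntegrable (fun t => ‖w' t‖ ^ p) volume 0 T)
    (hw''i : IntervalIntegrable w'' volume 0 T) :
    Filter.Tendsto
      (fun α : ℝ => (∫ t in (0:ℝ)..T, ‖caputoDeriv α w' t - w' t‖ ^ p) ^ (1/p))
      (nhdsWithin 1 (Set.Iio (1:ℝ))) (nhds 0) := by
  have hp0 : (0:ℝ) < p := lt_of_lt_of_le one_pos hp
  set l := nhdsWithin (1:ℝ) (Set.Iio (1:ℝ)) with hl
  have hw''I : IntegrableOn w'' (Ioc 0 T) :=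
    (intervalIntegrable_iff_integrableOn_Ioc_of_le hT.le).mp hw''i
  have hw'I : IntegrableOn w' (Ioc 0 T) :=
    (intervalIntegrable_iff_integrableOn_Ioc_of_le hT.le).mp hw'i
  have hw'pI : IntegrableOn (fun t => ‖w' t‖ ^ p) (Ioc 0 T) :=
    (intervalIntegrable_iff_integrableOn_Ioc_of_le hT.le).mp hw'p
  set g : ℝ → ℝ → X := fun α t => (Real.Gamma (2 - α))⁻¹ •
      ((t ^ (1 - α) : ℝ) • w' 0
        + ∫ r in Ioc 0 T, ((max (t - r) 0) ^ (1 - α) : ℝ) • w'' r) with hg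
  set M : ℝ := max 1 T with hM
  set C1 : ℝ := ∫ r in Ioc 0 T, ‖w'' r‖ with hC1
  have hC1nn : 0 ≤ C1 := setIntegral_nonneg measurableSet_Ioc (fun r _ => norm_nonneg _)
  have hMnn : (1:ℝ) ≤ M := le_max_left _ _
  set C : ℝ := 2 * (M * ‖w' 0‖ + M * C1) with hC
  have hCnn : 0 ≤ C := by positivity
  -- Gamma limit
  have hGamma1 : Tendsto (fun α : ℝ => (Real.Gamma (2 - α))⁻¹) l (𝓝 1) := by
    have hc : ContinuousAt Real.Gamma 1 := by
      apply (Real.differentiableAt_Gamma _).continuousAt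
      intro m h
      have : (0:ℝ) ≤ m := Nat.cast_nonneg m
      linarith [h]
    have h2 : Tendsto (fun α : ℝ => 2 - α) l (𝓝 1) := by
      have h : Continuous (fun α : ℝ => 2 - α) := continuous_const.sub continuous_id
      have := (h.tendsto (1:ℝ)).mono_left (nhdsWithin_le_nhds (s := Set.Iio (1:ℝ)))
      rw [show (2:ℝ) - 1 = 1 by norm_num] at this
      exact this
    have h3 := hc.tendsto.comp h2
    rw [Real.Gamma_one] at h3
    simpa using h3.inv₀ one_ne_zero
  -- pointwise limit
  have hpt : ∀ t ∈ Ioc (0:ℝ) T, Tendsto (fun α => g α t) l (𝓝 (w' t)) := by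
    intro t htm
    have hval : w' t = (1:ℝ) • (((1:ℝ)) • w' 0 + ∫ r in Ioc 0 t, w'' r) := by
      rw [one_smul, one_smul, hw' t ⟨htm.1.le, htm.2⟩,
        intervalIntegral.integral_of_le htm.1.le]
    rw [hval]
    exact hGamma1.smul (((tendsto_const_rpow_one_sub htm.1).smul_const (w' 0)).add
      (inner_tendsto htm.1 htm.2 hw''I))
  -- uniform bound
  have hGamma2 : ∀ᶠ α in l, (Real.Gamma (2 - α))⁻¹ ∈ Ioo (0:ℝ) 2 :=
    hGamma1.eventually (Ioo_mem_nhds (by norm_num) (by norm_num))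
  have hgbound : ∀ᶠ α in l, ∀ t ∈ Ioc (0:ℝ) T, ‖g α t‖ ≤ C := by
    filter_upwards [mem_Ioo_eventually, hGamma2] with α hα hΓ
    intro t htm
    rw [hg]
    simp only
    rw [norm_smul, Real.norm_eq_abs, abs_of_nonneg hΓ.1.le]
    have hb1 : ‖(t ^ (1 - α) : ℝ) • w' 0‖ ≤ M * ‖w' 0‖ := by
      rw [norm_smul, Real.norm_eq_abs, abs_of_nonneg (Real.rpow_nonneg htm.1.le _)]
      exact mul_le_mul_of_nonneg_right
        (rpow_le_one_max htm.1.le htm.2 (by linarith [hα.2]) (by linarith [hα.1]))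
        (norm_nonneg _)
    have hb2 : ‖∫ r in Ioc 0 T, ((max (t - r) 0) ^ (1 - α) : ℝ) • w'' r‖ ≤ M * C1 := by
      calc ‖∫ r in Ioc 0 T, ((max (t - r) 0) ^ (1 - α) : ℝ) • w'' r‖
          ≤ ∫ r in Ioc 0 T, ‖((max (t - r) 0) ^ (1 - α) : ℝ) • w'' r‖ :=
            norm_integral_le_integral_norm _
        _ ≤ ∫ r in Ioc 0 T, M * ‖w'' r‖ := by
            apply setIntegral_mono_on
              ((maxker_intable hα.1 hα.2 htm.1.le htm.2 hw''I).norm)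
              (hw''I.norm.const_mul M) measurableSet_Ioc
            intro r hr
            rw [norm_smul, Real.norm_eq_abs,
              abs_of_nonneg (Real.rpow_nonneg (le_max_right _ _) _)]
            exact mul_le_mul_of_nonneg_right
              (rpow_le_one_max (le_max_right _ _)
                (max_le (by linarith [hr.1, htm.2]) (by linarith [hT]))
                (by linarith [hα.2]) (by linarith [hα.1]))
              (norm_nonneg _)
        _ = M * C1 := by rw [hC1, MeasureTheory.integral_const_mul]
    calc (Real.Gamma (2 - α))⁻¹ * ‖(t ^ (1 - α) : ℝ) • w' 0
          + ∫ r in Ioc 0 T, ((max (t - r) 0) ^ (1 - α) : ℝ) • w'' r‖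
        ≤ 2 * (M * ‖w' 0‖ + M * C1) := by
          apply mul_le_mul hΓ.2.le _ (norm_nonneg _) (by norm_num)
          exact (norm_add_le _ _).trans (add_le_add hb1 hb2)
      _ = C := by rw [hC]
  -- continuity (hence measurability) of g α
  have hgcont : ∀ α ∈ Ioo (0:ℝ) 1, Continuous (g α) := by
    intro α hα
    apply Continuous.smul continuous_const
    apply Continuous.add
    · exact (Real.continuous_rpow_const (by linarith [hα.2])).smul continuous_const
    · rw [continuous_iff_continuousAt]
      intro t₀
      apply MeasureTheory.continuousAt_of_dominated
        (bound := fun r => (max 1 (|t₀| + 1)) * ‖w'' r‖)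
      · apply Eventually.of_forall
        intro t
        exact ((maxker_cont hα.2).aestronglyMeasurable).smul hw''I.aestronglyMeasurable
      · have hball : ∀ᶠ t in 𝓝 t₀, t ∈ Metric.ball t₀ 1 :=
          Metric.ball_mem_nhds t₀ one_pos
        filter_upwards [hball] with t htb
        filter_upwards [ae_restrict_mem measurableSet_Ioc] with r hr
        rw [norm_smul, Real.norm_eq_abs, abs_of_nonneg (Real.rpow_nonneg (le_max_right _ _) _)]
        apply mul_le_mul_of_nonneg_right _ (norm_nonneg _)
        have htle : t ≤ |t₀| + 1 := by
          have := Real.dist_eq t t₀ ▸ Metric.mem_ball.mp htb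
          have h1 := abs_lt.mp this
          have h2 := le_abs_self t₀
          linarith [h1.2]
        exact rpow_le_one_max (le_max_right _ _)
          (max_le (by linarith [hr.1]) (by positivity))
          (by linarith [hα.2]) (by linarith [hα.1])
      · exact hw''I.norm.const_mul _
      · apply Eventually.of_forall
        intro r
        apply Continuous.continuousAt
        exact ((Real.continuous_rpow_const (by linarith [hα.2])).comp
          ((continuous_id.sub continuous_const).max continuous_const)).smul continuous_const
  -- outer dominated convergence
  have houter : Tendsto (fun α => ∫ t in Ioc (0:ℝ) T, ‖g α t - w' t‖ ^ p) l
      (𝓝 (∫ _ in Ioc (0:ℝ) T, (0:ℝ))) := by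
    apply MeasureTheory.tendsto_integral_filter_of_dominated_convergence
      (bound := fun t => (C + ‖w' t‖) ^ p)
    · filter_upwards [mem_Ioo_eventually] with α hα
      apply Continuous.comp_aestronglyMeasurable (Real.continuous_rpow_const hp0.le)
      exact (((hgcont α hα).aestronglyMeasurable.sub hw'I.aestronglyMeasurable)).norm
    · filter_upwards [hgbound] with α hb
      filter_upwards [ae_restrict_mem measurableSet_Ioc] with t htm
      rw [Real.norm_eq_abs, abs_of_nonneg (Real.rpow_nonneg (norm_nonneg _) _)]
      apply Real.rpow_le_rpow (norm_nonneg _) _ hp0.le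
      calc ‖g α t - w' t‖ ≤ ‖g α t‖ + ‖w' t‖ := norm_sub_le _ _
        _ ≤ C + ‖w' t‖ := add_le_add_left (hb t htm) _
    · -- integrability of the bound
      apply Integrable.mono'
        (g := fun t => (2:ℝ) ^ p * (C ^ p + ‖w' t‖ ^ p))
        (((integrable_const (C ^ p)).add hw'pI).const_mul ((2:ℝ) ^ p))
      · apply Continuous.comp_aestronglyMeasurable (Real.continuous_rpow_const hp0.le)
        exact aestronglyMeasurable_const.add hw'I.aestronglyMeasurable.norm
      · apply Eventually.of_forall
        intro t
        rw [Real.norm_eq_abs, abs_of_nonneg (Real.rpow_nonneg (by positivity) _)]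
        have h1 : C + ‖w' t‖ ≤ 2 * max C ‖w' t‖ := by
          rcases le_total C ‖w' t‖ with h | h
          · rw [max_eq_right h]; linarith
          · rw [max_eq_left h]; linarith
        calc (C + ‖w' t‖) ^ p ≤ (2 * max C ‖w' t‖) ^ p :=
              Real.rpow_le_rpow (by positivity) h1 hp0.le
          _ = 2 ^ p * (max C ‖w' t‖) ^ p :=
              Real.mul_rpow (by norm_num) (le_max_of_le_left hCnn)
          _ ≤ 2 ^ p * (C ^ p + ‖w' t‖ ^ p) := by
              apply mul_le_mul_of_nonneg_left _ (by positivity)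
              rcases le_total C ‖w' t‖ with h | h
              · rw [max_eq_right h]
                have : (0:ℝ) ≤ C ^ p := Real.rpow_nonneg hCnn _
                linarith
              · rw [max_eq_left h]
                have : (0:ℝ) ≤ ‖w' t‖ ^ p := Real.rpow_nonneg (norm_nonneg _) _
                linarith
    · filter_upwards [ae_restrict_mem measurableSet_Ioc] with t htm
      have h2 : Tendsto (fun α => ‖g α t - w' t‖) l (𝓝 0) := by
        have := ((hpt t htm).sub (tendsto_const_nhds (x := w' t))).norm
        simpa using this
      have h3 := h2.rpow_const (p := p) (Or.inr hp0.le)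
      rwa [Real.zero_rpow hp0.ne'] at h3
  rw [MeasureTheory.integral_zero] at houter
  -- identify the interval integral with the g-version, eventually in α
  have hcongr : ∀ᶠ α in l,
      (∫ t in (0:ℝ)..T, ‖caputoDeriv α w' t - w' t‖ ^ p)
        = ∫ t in Ioc (0:ℝ) T, ‖g α t - w' t‖ ^ p := by
    filter_upwards [mem_Ioo_eventually] with α hα
    rw [intervalIntegral.integral_of_le hT.le]
    apply setIntegral_congr_fun measurableSet_Ioc
    intro t htm
    show ‖caputoDeriv α w' t - w' t‖ ^ p = ‖g α t - w' t‖ ^ p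
    rw [caputo_eq hα.1 hα.2 hw' hw''I ⟨htm.1.le, htm.2⟩]
  have hmain : Tendsto (fun α => ∫ t in (0:ℝ)..T, ‖caputoDeriv α w' t - w' t‖ ^ p) l (𝓝 0) :=
    houter.congr' (hcongr.mono (fun α h => h.symm))
  have hfinal := hmain.rpow_const (p := 1/p) (Or.inr (by positivity))
  rwa [Real.zero_rpow (by positivity)] at hfinal
end

section
/- For any w ∈ W^{1,p}(0,T;X) with 1 ≤ p < ∞ and X a Banach space, the Caputo derivative D_t^α w converges to w - w(0) in L^p(0,T;X) as α → 0⁺; i.e., limsup_{α→0⁺} ‖D_t^α w - w + w(0)‖_{L^p(0,T;X)} = 0. -/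
open MeasureTheory Set Filter
open scoped ENNReal NNReal

namespace CaputoAux

noncomputable def cc (α : ℝ) : ℝ := (Real.Gamma (1 - α))⁻¹

noncomputable def kR (α u : ℝ) : ℝ := |cc α * u ^ (-α) - 1|

noncomputable def kE (α u : ℝ) : ℝ≥0∞ := ENNReal.ofReal (kR α u)

noncomputable def AE (α T : ℝ) : ℝ≥0∞ := ∫⁻ u in Ioo 0 T, kE α u

lemma kR_nonneg (α u : ℝ) : 0 ≤ kR α u := abs_nonneg _

lemma kR_meas (α : ℝ) : Measurable (kR α) := by unfold kR cc; fun_prop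

lemma kE_meas (α : ℝ) : Measurable (kE α) :=
  ENNReal.measurable_ofReal.comp (kR_meas α)

lemma shift_refl (t : ℝ) (k : ℝ → ℝ≥0∞) :
    ∫⁻ s in Ioo 0 t, k (t - s) = ∫⁻ u in Ioo 0 t, k u := by
  have h := (Measure.measurePreserving_sub_left (volume : Measure ℝ) t).setLIntegral_comp_preimage_emb
    (MeasurableEquiv.subLeft t).measurableEmbedding k (Ioo 0 t)
  have hpre : (fun s : ℝ => t - s) ⁻¹' (Ioo 0 t) = Ioo 0 t := by
    ext x; simp only [mem_preimage, mem_Ioo]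
    constructor <;> (rintro ⟨h1, h2⟩; constructor <;> linarith)
  simpa [hpre] using h

lemma shift_right (s T : ℝ) (k : ℝ → ℝ≥0∞) :
    ∫⁻ t in Ioo s T, k (t - s) = ∫⁻ u in Ioo 0 (T - s), k u := by
  have h := (measurePreserving_sub_right (volume : Measure ℝ) s).setLIntegral_comp_preimage_emb
    (MeasurableEquiv.subRight s).measurableEmbedding k (Ioo 0 (T - s))
  have hpre : (fun u : ℝ => u - s) ⁻¹' (Ioo 0 (T - s)) = Ioo s T := by
    ext x; simp only [mem_preimage, mem_Ioo]
    constructor <;> (rintro ⟨h1, h2⟩; constructor <;> linarith)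
  simpa [hpre] using h

lemma kR_integrableOn {α T : ℝ} (hα : 0 < α) (hα1 : α < 1) (hT : 0 < T) :
    IntegrableOn (kR α) (Ioo 0 T) := by
  have h1 : IntegrableOn (fun u : ℝ => u ^ (-α)) (Ioo 0 T) := by
    have := (intervalIntegral.intervalIntegrable_rpow' (a := 0) (b := T)
      (r := -α) (by linarith)).1
    exact this.mono_set Ioo_subset_Ioc_self
  have h2 : IntegrableOn (fun u : ℝ => cc α * u ^ (-α) - 1) (Ioo 0 T) :=
    (h1.const_mul _).sub (integrableOn_const measure_Ioo_lt_top.ne)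
  exact h2.abs

lemma AE_lt_top {α T : ℝ} (hα : 0 < α) (hα1 : α < 1) (hT : 0 < T) :
    AE α T < ∞ :=
  (kR_integrableOn hα hα1 hT).lintegral_lt_top

lemma AE_toReal (α T : ℝ) (hα : 0 < α) (hα1 : α < 1) (hT : 0 < T) :
    (AE α T).toReal = ∫ u in Ioo 0 T, kR α u :=
  (integral_eq_lintegral_of_nonneg_ae (ae_of_all _ (kR_nonneg α))
    (kR_meas α).aestronglyMeasurable).symm

lemma cc_tendsto : Tendsto cc (nhds 0) (nhds 1) := by
  have hg : ContinuousAt Real.Gamma 1 := by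
    refine (Real.differentiableAt_Gamma ?_).continuousAt
    intro m h
    have h0 : (0:ℝ) ≤ (m:ℝ) := Nat.cast_nonneg m
    linarith
  have h1 : Tendsto (fun α : ℝ => Real.Gamma (1 - α)) (nhds 0) (nhds 1) := by
    have h2 : Tendsto (fun α : ℝ => 1 - α) (nhds 0) (nhds 1) := by
      exact (continuous_const.sub continuous_id).tendsto' (0:ℝ) 1 (by simp)
    simpa [Function.comp_def, Real.Gamma_one] using hg.tendsto.comp h2
  show Tendsto (fun α : ℝ => (Real.Gamma (1 - α))⁻¹) _ _
  simpa using h1.inv₀ one_ne_zero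

lemma tendsto_A {T : ℝ} (hT : 0 < T) :
    Tendsto (fun α => ∫ u in Ioo 0 T, kR α u) (nhdsWithin 0 (Ioi 0)) (nhds 0) := by
  set l := nhdsWithin (0:ℝ) (Ioi 0) with hl
  have hbound : IntegrableOn (fun u : ℝ => 2 * (u ^ (-(1/2:ℝ)) + 1) + 1) (Ioo 0 T) := by
    have h1 : IntegrableOn (fun u : ℝ => u ^ (-(1/2:ℝ))) (Ioo 0 T) :=
      (intervalIntegral.intervalIntegrable_rpow' (a := 0) (b := T)
        (by norm_num)).1.mono_set Ioo_subset_Ioc_self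
    exact ((h1.add (integrableOn_const measure_Ioo_lt_top.ne)).const_mul 2).add
      (integrableOn_const measure_Ioo_lt_top.ne)
  have hev : ∀ᶠ α : ℝ in l, α ∈ Ioc 0 (1/2) ∧ cc α ≤ 2 := by
    have h1 : Ioc (0:ℝ) (1/2) ∈ l := Ioc_mem_nhdsGT_of_mem (by constructor <;> norm_num)
    have h2 : ∀ᶠ α : ℝ in l, cc α ≤ 2 := by
      have := (cc_tendsto.mono_left (nhdsWithin_le_nhds (s := Ioi (0:ℝ)))).eventually
        (eventually_le_nhds (by norm_num : (1:ℝ) < 2))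
      exact this
    exact (eventually_of_mem h1 fun x hx => hx).and h2
  have hFmeas : ∀ᶠ α : ℝ in l, AEStronglyMeasurable (kR α) (volume.restrict (Ioo 0 T)) :=
    Eventually.of_forall fun α => (kR_meas α).aestronglyMeasurable
  have h_bound : ∀ᶠ α : ℝ in l, ∀ᵐ u ∂(volume.restrict (Ioo 0 T)),
      ‖kR α u‖ ≤ 2 * (u ^ (-(1/2:ℝ)) + 1) + 1 := by
    filter_upwards [hev] with α ⟨⟨hα0, hα2⟩, hcc2⟩
    refine (ae_restrict_iff' measurableSet_Ioo).2 (Eventually.of_forall fun u hu => ?_)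
    have hu0 : 0 < u := hu.1
    have hcc0 : 0 ≤ cc α := by
      have := Real.Gamma_pos_of_pos (by linarith : (0:ℝ) < 1 - α)
      exact inv_nonneg.2 this.le
    have hpow : u ^ (-α) ≤ u ^ (-(1/2:ℝ)) + 1 := by
      rcases le_or_gt u 1 with hu1 | hu1
      · have : u ^ (-α) ≤ u ^ (-(1/2:ℝ)) :=
          Real.rpow_le_rpow_of_exponent_ge hu0 hu1 (by linarith)
        linarith
      · have h0 : u ^ (-α) ≤ 1 :=
          Real.rpow_le_one_of_one_le_of_nonpos hu1.le (by linarith)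
        have h1 : 0 ≤ u ^ (-(1/2:ℝ)) := Real.rpow_nonneg hu0.le _
        linarith
    have habs : ‖kR α u‖ = kR α u := Real.norm_of_nonneg (kR_nonneg α u)
    rw [habs]
    calc kR α u ≤ |cc α * u ^ (-α)| + |(1:ℝ)| := abs_sub _ _
      _ = cc α * u ^ (-α) + 1 := by
          rw [abs_of_nonneg (mul_nonneg hcc0 (Real.rpow_nonneg hu0.le _)), abs_one]
      _ ≤ 2 * (u ^ (-(1/2:ℝ)) + 1) + 1 := by
          have : cc α * u ^ (-α) ≤ 2 * (u ^ (-(1/2:ℝ)) + 1) :=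
            mul_le_mul hcc2 hpow (Real.rpow_nonneg hu0.le _) (by norm_num)
          linarith
  have h_lim : ∀ᵐ u ∂(volume.restrict (Ioo 0 T)),
      Tendsto (fun α : ℝ => kR α u) l (nhds 0) := by
    refine (ae_restrict_iff' measurableSet_Ioo).2 (Eventually.of_forall fun u hu => ?_)
    have hu0 : 0 < u := hu.1
    have hru : Tendsto (fun α : ℝ => u ^ (-α)) l (nhds 1) := by
      have hc : ContinuousAt (fun p : ℝ × ℝ => p.1 ^ p.2) (u, 0) :=
        Real.continuousAt_rpow (u, 0) (Or.inl hu0.ne')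
      have hpair : Tendsto (fun α : ℝ => ((u, -α) : ℝ × ℝ)) l (nhds (u, 0)) := by
        refine Tendsto.prodMk_nhds tendsto_const_nhds ?_
        have h3 : Tendsto (fun a : ℝ => -a) l (nhds (-0)) :=
          (continuous_neg.tendsto (0:ℝ)).mono_left (nhdsWithin_le_nhds (s := Ioi (0:ℝ)))
        simpa using h3
      have := hc.tendsto.comp hpair
      simpa [Function.comp_def, Real.rpow_zero] using this
    have h2 : Tendsto (fun α : ℝ => cc α * u ^ (-α) - 1) l (nhds 0) := by
      have := ((cc_tendsto.mono_left (nhdsWithin_le_nhds (s := Ioi (0:ℝ)))).mul hru).sub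
        (tendsto_const_nhds (x := (1:ℝ)))
      simpa using this
    have := h2.abs
    simpa [kR] using this
  have := tendsto_integral_filter_of_dominated_convergence (μ := volume.restrict (Ioo 0 T))
    (F := fun α u => kR α u) (f := fun _ => (0:ℝ)) _ hFmeas h_bound hbound h_lim
  simpa using this

lemma hoelder_step {p : ℝ} (hp : 1 ≤ p) (μ : Measure ℝ) (k f : ℝ → ℝ≥0∞)
    (hk : AEMeasurable k μ) (hf : AEMeasurable f μ) :
    (∫⁻ s, k s * f s ∂μ) ^ p ≤ (∫⁻ s, k s ∂μ) ^ (p - 1) * ∫⁻ s, k s * f s ^ p ∂μ := by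
  rcases eq_or_lt_of_le hp with hp1 | hp1
  · rw [← hp1]; simp
  set q := p / (p - 1) with hq
  have hpq : p.HolderConjugate q := Real.HolderConjugate.conjExponent hp1
  have hp0 : (0:ℝ) < p := by linarith
  have hq0 : (0:ℝ) < q := hpq.symm.pos
  have hkey : (fun s => k s * f s) = fun s => (k s ^ (1/p) * f s) * k s ^ (1/q) := by
    funext s
    rw [mul_right_comm, ← ENNReal.rpow_add_of_nonneg _ _ (by positivity) (by positivity),
      one_div, one_div, hpq.inv_add_inv_eq_one, ENNReal.rpow_one]
  have H := ENNReal.lintegral_mul_le_Lp_mul_Lq μ hpq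
    ((hk.pow_const (1/p)).mul hf) (hk.pow_const (1/q))
  have e1 : ∀ s, (k s ^ (1/p) * f s) ^ p = k s * f s ^ p := by
    intro s
    rw [ENNReal.mul_rpow_of_nonneg _ _ hp0.le, ← ENNReal.rpow_mul,
      one_div, inv_mul_cancel₀ hp0.ne', ENNReal.rpow_one]
  have e2 : ∀ s, (k s ^ (1/q)) ^ q = k s := by
    intro s
    rw [← ENNReal.rpow_mul, one_div, inv_mul_cancel₀ hq0.ne', ENNReal.rpow_one]
  have H2 : ∫⁻ s, k s * f s ∂μ
      ≤ (∫⁻ s, k s * f s ^ p ∂μ) ^ (1/p) * (∫⁻ s, k s ∂μ) ^ (1/q) := by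
    calc ∫⁻ s, k s * f s ∂μ
        = ∫⁻ s, ((fun s => k s ^ (1/p) * f s) * fun s => k s ^ (1/q)) s ∂μ := by
          refine lintegral_congr fun s => ?_
          rw [Pi.mul_apply]
          exact congrFun hkey s
      _ ≤ (∫⁻ s, (k s ^ (1/p) * f s) ^ p ∂μ) ^ (1/p) * (∫⁻ s, (k s ^ (1/q)) ^ q ∂μ) ^ (1/q) := by
          exact H
      _ = (∫⁻ s, k s * f s ^ p ∂μ) ^ (1/p) * (∫⁻ s, k s ∂μ) ^ (1/q) := by
          simp only [e1, e2]
  calc (∫⁻ s, k s * f s ∂μ) ^ p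
      ≤ ((∫⁻ s, k s * f s ^ p ∂μ) ^ (1/p) * (∫⁻ s, k s ∂μ) ^ (1/q)) ^ p :=
        ENNReal.rpow_le_rpow H2 hp0.le
    _ = (∫⁻ s, k s * f s ^ p ∂μ) * (∫⁻ s, k s ∂μ) ^ (p - 1) := by
        rw [ENNReal.mul_rpow_of_nonneg _ _ hp0.le, ← ENNReal.rpow_mul, ← ENNReal.rpow_mul,
          one_div, inv_mul_cancel₀ hp0.ne', ENNReal.rpow_one]
        congr 1
        rw [hq]
        field_simp
    _ = (∫⁻ s, k s ∂μ) ^ (p - 1) * ∫⁻ s, k s * f s ^ p ∂μ := mul_comm _ _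

lemma fubini_step {T : ℝ} (hT : 0 < T) (α : ℝ) (f : ℝ → ℝ≥0∞) (hf : Measurable f) :
    ∫⁻ t in Ioo 0 T, ∫⁻ s in Ioo 0 t, kE α (t - s) * f s ≤ AE α T * ∫⁻ s in Ioo 0 T, f s := by
  set H : ℝ → ℝ → ℝ≥0∞ := fun t s => if s < t then kE α (t - s) * f s else 0 with hH
  have hHmeas : Measurable (Function.uncurry H) := by
    apply Measurable.ite
    · exact measurableSet_lt measurable_snd measurable_fst
    · exact ((kE_meas α).comp (measurable_fst.sub measurable_snd)).mul (hf.comp measurable_snd)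
    · exact measurable_const
  have step1 : ∫⁻ t in Ioo 0 T, ∫⁻ s in Ioo 0 t, kE α (t - s) * f s
      = ∫⁻ t in Ioo 0 T, ∫⁻ s in Ioo 0 T, H t s := by
    refine setLIntegral_congr_fun measurableSet_Ioo (fun t ht => ?_)
    have hset : Ioo (0:ℝ) t = Iio t ∩ Ioo 0 T := by
      ext x; simp only [mem_Ioo, mem_inter_iff, mem_Iio]
      constructor
      · rintro ⟨h1, h2⟩; exact ⟨h2, h1, h2.trans ht.2⟩
      · rintro ⟨h1, h2, h3⟩; exact ⟨h2, h1⟩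
    calc ∫⁻ s in Ioo 0 t, kE α (t - s) * f s
        = ∫⁻ s in Iio t ∩ Ioo 0 T, kE α (t - s) * f s := by rw [← hset]
      _ = ∫⁻ s in Ioo 0 T, (Iio t).indicator (fun s => kE α (t - s) * f s) s := by
          rw [lintegral_indicator measurableSet_Iio,
            Measure.restrict_restrict measurableSet_Iio]
      _ = ∫⁻ s in Ioo 0 T, H t s := by
          refine lintegral_congr fun s => ?_
          simp only [hH, indicator_apply, mem_Iio]
  have step2 : ∫⁻ t in Ioo 0 T, ∫⁻ s in Ioo 0 T, H t s
      = ∫⁻ s in Ioo 0 T, ∫⁻ t in Ioo 0 T, H t s :=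
    lintegral_lintegral_swap hHmeas.aemeasurable
  have step3 : ∫⁻ s in Ioo 0 T, ∫⁻ t in Ioo 0 T, H t s
      ≤ ∫⁻ s in Ioo 0 T, AE α T * f s := by
    refine lintegral_mono_ae ((ae_restrict_iff' measurableSet_Ioo).2
      (Eventually.of_forall fun s hs => ?_))
    have hset : Ioi s ∩ Ioo (0:ℝ) T = Ioo s T := by
      ext x; simp only [mem_Ioo, mem_inter_iff, mem_Ioi]
      constructor
      · rintro ⟨h1, h2, h3⟩; exact ⟨h1, h3⟩
      · rintro ⟨h1, h2⟩; exact ⟨h1, hs.1.trans h1, h2⟩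
    calc ∫⁻ t in Ioo 0 T, H t s
        = ∫⁻ t in Ioo 0 T, (Ioi s).indicator (fun t => kE α (t - s) * f s) t := by
          refine lintegral_congr fun t => ?_
          simp only [hH, indicator_apply, mem_Ioi]
      _ = ∫⁻ t in Ioi s ∩ Ioo 0 T, kE α (t - s) * f s := by
          rw [lintegral_indicator measurableSet_Ioi,
            Measure.restrict_restrict measurableSet_Ioi]
      _ = ∫⁻ t in Ioo s T, kE α (t - s) * f s := by rw [hset]
      _ = (∫⁻ t in Ioo s T, kE α (t - s)) * f s :=
          lintegral_mul_const _ ((kE_meas α).comp (measurable_id.sub measurable_const))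
      _ = (∫⁻ u in Ioo 0 (T - s), kE α u) * f s := by rw [shift_right]
      _ ≤ AE α T * f s := by
          refine mul_le_mul_left (lintegral_mono_set (Ioo_subset_Ioo le_rfl (by linarith [hs.1]))) _
  have step4 : ∫⁻ s in Ioo 0 T, AE α T * f s = AE α T * ∫⁻ s in Ioo 0 T, f s :=
    lintegral_const_mul _ hf
  rw [step1, step2, ← step4]
  exact step3

lemma norm_bound {X : Type*} [NormedAddCommGroup X] [NormedSpace ℝ X] [CompleteSpace X]
    {α : ℝ} (hα : 0 < α) (w' : ℝ → X) (hm : StronglyMeasurable w')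
    {t : ℝ} (ht : 0 < t) (hi : IntegrableOn w' (Ioo 0 t)) :
    (‖caputoDeriv α w' t - ∫ s in (0:ℝ)..t, w' s‖₊ : ℝ≥0∞)
      ≤ ∫⁻ s in Ioo 0 t, kE α (t - s) * ‖w' s‖₊ := by
  by_cases hfin : (∫⁻ s in Ioo 0 t, kE α (t - s) * ‖w' s‖₊) = ∞
  · rw [hfin]; exact le_top
  set g : ℝ → X := fun s => (cc α * (t - s) ^ (-α) - 1) • w' s with hg
  have hgnorm : ∀ s, (‖g s‖₊ : ℝ≥0∞) = kE α (t - s) * ‖w' s‖₊ := by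
    intro s
    rw [hg]
    simp only [nnnorm_smul, ENNReal.coe_mul, kE, kR]
    congr 1
    rw [← enorm_eq_nnnorm, ← ofReal_norm, Real.norm_eq_abs]
  have hgmeas : AEStronglyMeasurable g (volume.restrict (Ioo 0 t)) := by
    refine StronglyMeasurable.aestronglyMeasurable ?_
    refine StronglyMeasurable.smul ?_ hm
    refine Measurable.stronglyMeasurable ?_
    unfold cc; fun_prop
  have hgint : IntegrableOn g (Ioo 0 t) := by
    refine ⟨hgmeas, ?_⟩
    rw [hasFiniteIntegral_def]
    calc ∫⁻ s in Ioo 0 t, (‖g s‖₊ : ℝ≥0∞)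
        = ∫⁻ s in Ioo 0 t, kE α (t - s) * ‖w' s‖₊ := by
          exact lintegral_congr fun s => hgnorm s
      _ < ∞ := lt_top_iff_ne_top.2 hfin
  have hIooIoc : (volume : Measure ℝ).restrict (Ioo 0 t) = volume.restrict (Ioc 0 t) :=
    Measure.restrict_congr_set Ioo_ae_eq_Ioc
  have hgIoc : IntegrableOn g (Ioc 0 t) := by
    unfold IntegrableOn
    rw [← hIooIoc]; exact hgint
  have hiIoc : IntegrableOn w' (Ioc 0 t) := by
    unfold IntegrableOn
    rw [← hIooIoc]; exact hi
  have hgii : IntervalIntegrable g volume 0 t :=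
    (intervalIntegrable_iff_integrableOn_Ioc_of_le ht.le).2 hgIoc
  have hwii : IntervalIntegrable w' volume 0 t :=
    (intervalIntegrable_iff_integrableOn_Ioc_of_le ht.le).2 hiIoc
  have hcii : IntervalIntegrable (fun s => (cc α * (t - s) ^ (-α)) • w' s) volume 0 t := by
    have he : (fun s => (cc α * (t - s) ^ (-α)) • w' s) = fun s => g s + w' s := by
      funext s; rw [hg]; simp only [sub_smul, one_smul, sub_add_cancel]
    rw [he]; exact hgii.add hwii
  have hcap : caputoDeriv α w' t - ∫ s in (0:ℝ)..t, w' s = ∫ s in (0:ℝ)..t, g s := by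
    rw [caputoDeriv, ← intervalIntegral.integral_smul]
    have he : ∀ s, (Real.Gamma (1 - α))⁻¹ • ((t - s) ^ (-α) : ℝ) • w' s
        = (cc α * (t - s) ^ (-α)) • w' s := by
      intro s; rw [smul_smul]; rfl
    rw [intervalIntegral.integral_congr (g := fun s => (cc α * (t - s) ^ (-α)) • w' s)
      (fun s _ => he s)]
    rw [← intervalIntegral.integral_sub hcii hwii]
    refine intervalIntegral.integral_congr fun s _ => ?_
    rw [hg]; simp only [sub_smul, one_smul]
  rw [hcap, ← enorm_eq_nnnorm, ← ofReal_norm]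
  have h1 : ‖∫ s in (0:ℝ)..t, g s‖ ≤ ∫ s in (0:ℝ)..t, ‖g s‖ :=
    intervalIntegral.norm_integral_le_integral_norm ht.le
  calc ENNReal.ofReal ‖∫ s in (0:ℝ)..t, g s‖
      ≤ ENNReal.ofReal (∫ s in (0:ℝ)..t, ‖g s‖) := ENNReal.ofReal_le_ofReal h1
    _ = ∫⁻ s in Ioc 0 t, ENNReal.ofReal ‖g s‖ := by
        rw [intervalIntegral.integral_of_le ht.le]
        exact ofReal_integral_eq_lintegral_ofReal hgIoc.norm
          (Eventually.of_forall fun s => norm_nonneg _)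
    _ = ∫⁻ s in Ioo 0 t, ENNReal.ofReal ‖g s‖ := by rw [← hIooIoc]
    _ = ∫⁻ s in Ioo 0 t, kE α (t - s) * ‖w' s‖₊ := by
        refine lintegral_congr fun s => ?_
        rw [ofReal_norm, enorm_eq_nnnorm]; exact hgnorm s

end CaputoAux

/-- For `w ∈ W^{1,p}(0,T;X)` with `1 ≤ p < ∞`, the Caputo derivative `D_t^α w`
converges to `w - w(0)` in `L^p(0,T;X)` as `α → 0⁺`. -/
theorem caputo_tendsto_id_Lp {X : Type*} [NormedAddCommGroup X] [NormedSpace ℝ X]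
    [CompleteSpace X] (T p : ℝ) (hT : 0 < T) (hp : 1 ≤ p)
    (w w' : ℝ → X)
    (hw : ∀ t ∈ Set.Icc (0:ℝ) T, w t = w 0 + ∫ s in (0:ℝ)..t, w' s)
    (hw'i : IntervalIntegrable w' volume 0 T)
    (hw'p : IntervalIntegrable (fun t => ‖w' t‖ ^ p) volume 0 T) :
    Filter.Tendsto
      (fun α : ℝ => (∫ t in (0:ℝ)..T, ‖caputoDeriv α w' t - w t + w 0‖ ^ p) ^ (1/p))
      (nhdsWithin 0 (Set.Ioi (0:ℝ))) (nhds 0) := by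
  classical
  open CaputoAux in
  have hp0 : (0:ℝ) < p := by linarith
  obtain hA := hw'i.1.aestronglyMeasurable
  set w'' := hA.mk w' with hw''def
  have hmk : StronglyMeasurable w'' := hA.stronglyMeasurable_mk
  have heq : ∀ᵐ x ∂(volume.restrict (Ioc 0 T)), w' x = w'' x := hA.ae_eq_mk
  have heq' : ∀ᵐ x ∂(volume : Measure ℝ), x ∈ Ioc 0 T → w' x = w'' x :=
    (ae_restrict_iff' measurableSet_Ioc).1 heq
  have hw''i : IntegrableOn w'' (Ioc 0 T) := hw'i.1.congr heq
  have hw''p : IntegrableOn (fun s => ‖w'' s‖ ^ p) (Ioc 0 T) := by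
    refine hw'p.1.congr ?_
    filter_upwards [heq] with x hx; rw [hx]
  have hae : ∀ t, t ∈ Icc (0:ℝ) T →
      (∀ᵐ x ∂(volume : Measure ℝ), x ∈ Set.uIoc (0:ℝ) t → w' x = w'' x) := by
    intro t ht
    filter_upwards [heq'] with x hx hxm
    apply hx
    rw [uIoc_of_le ht.1] at hxm
    exact Ioc_subset_Ioc_right ht.2 hxm
  have key : ∀ α : ℝ, (∫ t in (0:ℝ)..T, ‖caputoDeriv α w' t - w t + w 0‖ ^ p)
      = ∫ t in (0:ℝ)..T, ‖caputoDeriv α w'' t - ∫ s in (0:ℝ)..t, w'' s‖ ^ p := by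
    intro α
    refine intervalIntegral.integral_congr fun t htm => ?_
    have ht : t ∈ Icc (0:ℝ) T := by rwa [uIcc_of_le hT.le] at htm
    have e1 : (∫ s in (0:ℝ)..t, w' s) = ∫ s in (0:ℝ)..t, w'' s := by
      refine intervalIntegral.integral_congr_ae ?_
      filter_upwards [hae t ht] with x hx hxm
      exact hx hxm
    have e2 : caputoDeriv α w' t = caputoDeriv α w'' t := by
      unfold caputoDeriv
      congr 1
      refine intervalIntegral.integral_congr_ae ?_
      filter_upwards [hae t ht] with x hx hxm
      rw [hx hxm]
    rw [hw t ht, e2, e1]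
    congr 2
    abel
  set B : ℝ≥0∞ := ∫⁻ s in Ioo 0 T, (‖w'' s‖₊ : ℝ≥0∞) ^ p with hBdef
  have hBeq : B = ∫⁻ s in Ioo 0 T, ENNReal.ofReal (‖w'' s‖ ^ p) := by
    refine lintegral_congr fun s => ?_
    rw [← enorm_eq_nnnorm, ← ofReal_norm, ENNReal.ofReal_rpow_of_nonneg (norm_nonneg _) hp0.le]
  have hBfin : B < ∞ := by
    rw [hBeq, Measure.restrict_congr_set Ioo_ae_eq_Ioc]
    exact hw''p.lintegral_lt_top
  set C : ℝ := B.toReal ^ (1/p) with hCdef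
  have hC0 : 0 ≤ C := Real.rpow_nonneg ENNReal.toReal_nonneg _
  have hupper : ∀ᶠ α : ℝ in nhdsWithin 0 (Ioi 0),
      (∫ t in (0:ℝ)..T, ‖caputoDeriv α w' t - w t + w 0‖ ^ p) ^ (1/p)
        ≤ (AE α T).toReal * C := by
    have hmem : Ioo (0:ℝ) 1 ∈ nhdsWithin (0:ℝ) (Ioi 0) :=
      Ioo_mem_nhdsGT_of_mem (by constructor <;> norm_num)
    filter_upwards [eventually_of_mem hmem fun x hx => hx] with α hα
    obtain ⟨hα0, hα1⟩ := hα
    have hAfin : AE α T < ∞ := AE_lt_top hα0 hα1 hT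
    set D : ℝ → X := fun t => caputoDeriv α w'' t - ∫ s in (0:ℝ)..t, w'' s with hDdef
    have hptw : ∀ t ∈ Ioo (0:ℝ) T, (‖D t‖₊ : ℝ≥0∞) ^ p ≤
        (AE α T) ^ (p-1) * ∫⁻ s in Ioo 0 t, kE α (t - s) * (‖w'' s‖₊ : ℝ≥0∞) ^ p := by
      intro t ht
      have hsub : Ioo (0:ℝ) t ⊆ Ioc 0 T := fun x hx => ⟨hx.1, (hx.2.trans ht.2).le⟩
      have hnb := norm_bound hα0 w'' hmk ht.1 (hw''i.mono_set hsub)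
      have hH := hoelder_step hp (volume.restrict (Ioo 0 t)) (fun s => kE α (t - s))
        (fun s => (‖w'' s‖₊ : ℝ≥0∞))
        ((kE_meas α).comp (measurable_const.sub measurable_id)).aemeasurable
        hmk.enorm.aemeasurable
      have hkint : (∫⁻ s in Ioo 0 t, kE α (t - s)) ≤ AE α T := by
        rw [shift_refl t (kE α)]
        exact lintegral_mono_set (Ioo_subset_Ioo le_rfl ht.2.le)
      calc (‖D t‖₊ : ℝ≥0∞) ^ p
          ≤ (∫⁻ s in Ioo 0 t, kE α (t - s) * ‖w'' s‖₊) ^ p :=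
            ENNReal.rpow_le_rpow hnb hp0.le
        _ ≤ (∫⁻ s in Ioo 0 t, kE α (t - s)) ^ (p-1)
              * ∫⁻ s in Ioo 0 t, kE α (t - s) * (‖w'' s‖₊ : ℝ≥0∞) ^ p := hH
        _ ≤ (AE α T) ^ (p-1) * ∫⁻ s in Ioo 0 t, kE α (t - s) * (‖w'' s‖₊ : ℝ≥0∞) ^ p :=
            mul_le_mul' (ENNReal.rpow_le_rpow hkint (by linarith)) le_rfl
    have hL : ∫⁻ t in Ioo 0 T, (‖D t‖₊ : ℝ≥0∞) ^ p ≤ AE α T ^ p * B := by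
      calc ∫⁻ t in Ioo 0 T, (‖D t‖₊ : ℝ≥0∞) ^ p
          ≤ ∫⁻ t in Ioo 0 T, (AE α T) ^ (p-1)
              * ∫⁻ s in Ioo 0 t, kE α (t - s) * (‖w'' s‖₊ : ℝ≥0∞) ^ p :=
            lintegral_mono_ae ((ae_restrict_iff' measurableSet_Ioo).2
              (Eventually.of_forall hptw))
        _ = (AE α T) ^ (p-1)
              * ∫⁻ t in Ioo 0 T, ∫⁻ s in Ioo 0 t, kE α (t - s) * (‖w'' s‖₊ : ℝ≥0∞) ^ p :=
            lintegral_const_mul' _ _ (ENNReal.rpow_lt_top_of_nonneg (by linarith) hAfin.ne).ne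
        _ ≤ (AE α T) ^ (p-1) * (AE α T * B) :=
            mul_le_mul' le_rfl (fubini_step hT α _ (hmk.enorm.pow_const p))
        _ = AE α T ^ p * B := by
            rw [← mul_assoc]
            congr 1
            have hrw : AE α T ^ p = AE α T ^ (p-1) * AE α T ^ (1:ℝ) := by
              rw [← ENNReal.rpow_add_of_nonneg _ _ (by linarith) zero_le_one]
              norm_num
            rw [hrw, ENNReal.rpow_one]
    have hABfin : AE α T ^ p * B ≠ ∞ :=
      (ENNReal.mul_lt_top (ENNReal.rpow_lt_top_of_nonneg hp0.le hAfin.ne) hBfin).ne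
    have hreal : (∫ t in (0:ℝ)..T, ‖caputoDeriv α w' t - w t + w 0‖ ^ p)
        = ∫ t in Ioo 0 T, ‖D t‖ ^ p := by
      rw [key α, intervalIntegral.integral_of_le hT.le, integral_Ioc_eq_integral_Ioo]
    have hle2 : ∫ t in Ioo 0 T, ‖D t‖ ^ p ≤ (AE α T ^ p * B).toReal := by
      by_cases hDint : Integrable (fun t => ‖D t‖ ^ p) (volume.restrict (Ioo 0 T))
      · rw [integral_eq_lintegral_of_nonneg_ae
          (ae_of_all _ fun t => Real.rpow_nonneg (norm_nonneg _) p)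
          hDint.aestronglyMeasurable]
        refine ENNReal.toReal_mono hABfin ?_
        refine le_trans (le_of_eq (lintegral_congr fun t => ?_)) hL
        rw [← ENNReal.ofReal_rpow_of_nonneg (norm_nonneg _) hp0.le,
          ofReal_norm, enorm_eq_nnnorm]
      · rw [integral_undef hDint]
        exact ENNReal.toReal_nonneg
    have hintnn : 0 ≤ ∫ t in Ioo 0 T, ‖D t‖ ^ p :=
      integral_nonneg fun t => Real.rpow_nonneg (norm_nonneg _) p
    calc (∫ t in (0:ℝ)..T, ‖caputoDeriv α w' t - w t + w 0‖ ^ p) ^ (1/p)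
        = (∫ t in Ioo 0 T, ‖D t‖ ^ p) ^ (1/p) := by rw [hreal]
      _ ≤ ((AE α T ^ p * B).toReal) ^ (1/p) :=
          Real.rpow_le_rpow hintnn hle2 (by positivity)
      _ = (AE α T).toReal * C := by
          rw [ENNReal.toReal_mul, ← ENNReal.toReal_rpow,
            Real.mul_rpow (Real.rpow_nonneg ENNReal.toReal_nonneg _) ENNReal.toReal_nonneg,
            ← Real.rpow_mul ENNReal.toReal_nonneg, mul_one_div_cancel hp0.ne',
            Real.rpow_one]
  have hlim : Tendsto (fun α => (AE α T).toReal * C) (nhdsWithin 0 (Ioi 0)) (nhds 0) := by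
    have hmem : Ioo (0:ℝ) 1 ∈ nhdsWithin (0:ℝ) (Ioi 0) :=
      Ioo_mem_nhdsGT_of_mem (by constructor <;> norm_num)
    have h1 : Tendsto (fun α => (AE α T).toReal) (nhdsWithin 0 (Ioi 0)) (nhds 0) := by
      refine (tendsto_A hT).congr' ?_
      filter_upwards [eventually_of_mem hmem fun x hx => hx] with α hα
      exact (AE_toReal α T hα.1 hα.2 hT).symm
    simpa using h1.mul_const C
  refine squeeze_zero' ?_ hupper hlim
  exact Eventually.of_forall fun α => Real.rpow_nonneg
    (intervalIntegral.integral_nonneg hT.le fun t _ => Real.rpow_nonneg (norm_nonneg _) p) _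
end
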